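/- Suppose Assumptions (A1)–(A6) hold. Under a good run, for every step t with 0 ≤ t ≤ 1/(√n p α) − 2, the sigmoid derivatives stay close to 1/2: max_{i∈[n]} |g_i^{(t)} − 1/2| ≤ 2/n^{3/2}, where g_i^{(t)} = −ℓ'(y_i f(x_i; W^{(t)})) and ℓ(z) = log(1 + e^{−z}). -/

import Mathlib

open MeasureTheory ProbabilityTheory BigOperators Filter
open scoped ENNReal NNReal

noncomputable section

namespace XOR

attribute [local instance] Classical.propDecidable

/-! ### Vectors, the network, and gradient descent -/

/-- Euclidean dot product on `Fin p → ℝ`. -/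
def dot {p : ℕ} (x y : Fin p → ℝ) : ℝ := ∑ k, x k * y k

/-- Euclidean norm. -/
def nrm {p : ℕ} (x : Fin p → ℝ) : ℝ := Real.sqrt (dot x x)

/-- The ReLU activation. -/
def relu (z : ℝ) : ℝ := max z 0

/-- (A choice of) the derivative of the ReLU. -/
def reluD (z : ℝ) : ℝ := if 0 < z then 1 else 0

/-- The two-layer ReLU network `f(x; W) = ∑ j, a j * φ(⟨w_j, x⟩)`. -/
def nnet {p m : ℕ} (a : Fin m → ℝ) (W : Fin m → Fin p → ℝ) (x : Fin p → ℝ) : ℝ :=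
  ∑ j, a j * relu (dot (W j) x)

/-- `g(z) = -ℓ'(z) = 1/(1+e^z)` for the logistic loss `ℓ(z) = log(1+e^{-z})`. -/
def lossG (z : ℝ) : ℝ := 1 / (1 + Real.exp z)

/-- One step of gradient descent on the first-layer weights:
`w_j^{(t+1)} = w_j^{(t)} + (α a_j / n) ∑ i g_i^{(t)} φ'(⟨w_j^{(t)}, x_i⟩) y_i x_i`. -/
def gdStep {n p m : ℕ} (α : ℝ) (X : Fin n → Fin p → ℝ) (Y : Fin n → ℝ)
    (a : Fin m → ℝ) (W : Fin m → Fin p → ℝ) : Fin m → Fin p → ℝ :=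
  fun j k => W j k + (α * a j / n) *
    ∑ i, lossG (Y i * nnet a W (X i)) * reluD (dot (W j) (X i)) * (Y i * X i k)

/-- The gradient descent iterates `W^{(t)}`. -/
def gdIter {n p m : ℕ} (α : ℝ) (X : Fin n → Fin p → ℝ) (Y : Fin n → ℝ)
    (a : Fin m → ℝ) (W0 : Fin m → Fin p → ℝ) : ℕ → Fin m → Fin p → ℝ
  | 0 => W0
  | t + 1 => gdStep α X Y a (gdIter α X Y a W0 t)

/-- Frobenius norm of the first-layer weight matrix. -/
def frob {p m : ℕ} (W : Fin m → Fin p → ℝ) : ℝ :=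
  Real.sqrt (∑ j, ∑ k, (W j k) ^ 2)

/-! ### The XOR cluster structure -/

/-- The four cluster centers `+μ₁, -μ₁, +μ₂, -μ₂`, indexed by `Fin 4`. -/
def ctr {p : ℕ} (μ1 μ2 : Fin p → ℝ) : Fin 4 → Fin p → ℝ := ![μ1, -μ1, μ2, -μ2]

/-- The clean label of each cluster. -/
def cl : Fin 4 → ℝ := ![1, 1, -1, -1]

/-- The index of the opposite center: `ν ↦ -ν`. -/
def negIdx : Fin 4 → Fin 4 := ![1, 0, 3, 2]

/-- The set of the four cluster centers. -/
def centers {p : ℕ} (μ1 μ2 : Fin p → ℝ) : Set (Fin p → ℝ) := {μ1, -μ1, μ2, -μ2}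

/-- Structural hypotheses on the means: orthogonality and equal norms. -/
def MeanHyp {p : ℕ} (μ1 μ2 : Fin p → ℝ) : Prop :=
  dot μ1 μ2 = 0 ∧ nrm μ1 = nrm μ2

/-- Basic constraints on the parameters: `η ∈ [0, 1/2)`, `α > 0`, `ω_init ≥ 0`. -/
def ParamHyp (η α winit : ℝ) : Prop :=
  0 ≤ η ∧ η < 1 / 2 ∧ 0 < α ∧ 0 ≤ winit

/-- Assumptions (A1)–(A6), where `μn = ‖μ‖`:
(A1) `‖μ‖² ≥ C n^{0.51} √p`, (A2) `p ≥ C n² ‖μ‖²`, (A3) `η ≤ 1/C`,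
(A4) `α ≤ 1/(C n p)`, (A5) `ω_init n m^{3/2} p ≤ α ‖μ‖²`, (A6) `m ≥ C n^{0.02}`. -/
def Assum (C : ℝ) (n p m : ℕ) (μn η α winit : ℝ) : Prop :=
  C * (n : ℝ) ^ (0.51 : ℝ) * Real.sqrt p ≤ μn ^ 2 ∧
  C * (n : ℝ) ^ 2 * μn ^ 2 ≤ (p : ℝ) ∧
  η ≤ 1 / C ∧
  α ≤ 1 / (C * n * p) ∧
  winit * n * (m : ℝ) ^ ((3 : ℝ) / 2) * (p : ℝ) ≤ α * μn ^ 2 ∧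
  C * (n : ℝ) ^ (0.02 : ℝ) ≤ (m : ℝ)

/-! ### The probability model

The randomness is generated from canonical sources: for each training sample a
uniform cluster index in `Fin 4`, standard Gaussian noise in `ℝ^p`, and a standard
Gaussian variable whose CDF-value is used as the (uniform) label-flip coin; for
the network, uniform signs in `Bool` for the second layer, and standard Gaussian
first-layer noise which is scaled by `ω_init`. -/

abbrev Vec (p : ℕ) := Fin p → ℝ

/-- Sample space: cluster indices, data noise, flip coins, second-layer signs,
and unscaled first-layer initialization. -/
abbrev Sample (n p m : ℕ) :=
  (Fin n → Fin 4) × (Fin n → Vec p) × (Fin n → ℝ) × (Fin m → Bool) × (Fin m → Vec p)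

/-- The standard Gaussian measure on `ℝ^p`. -/
def stdG (p : ℕ) : Measure (Vec p) := Measure.pi fun _ => gaussianReal 0 1

/-- The joint law of all randomness. -/
def sampleMeasure (n p m : ℕ) : Measure (Sample n p m) :=
  ((PMF.uniformOfFintype (Fin n → Fin 4)).toMeasure).prod
    ((Measure.pi fun _ : Fin n => stdG p).prod
      ((Measure.pi fun _ : Fin n => gaussianReal 0 1).prod
        (((PMF.uniformOfFintype (Fin m → Bool)).toMeasure).prod
          (Measure.pi fun _ : Fin m => stdG p))))

/-- The training inputs `x_i = x̄_i + ξ_i`. -/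
def trainX {n p m : ℕ} (μ1 μ2 : Vec p) (ω : Sample n p m) : Fin n → Vec p :=
  fun i => ctr μ1 μ2 (ω.1 i) + ω.2.1 i

/-- The (possibly flipped) training labels: the label is flipped iff the uniform
variable `Φ(g_i)` is `< η`, which happens with probability `η`. -/
def trainY {n p m : ℕ} (η : ℝ) (ω : Sample n p m) : Fin n → ℝ :=
  fun i => (if cdf (gaussianReal 0 1) (ω.2.2.1 i) < η then -1 else 1) * cl (ω.1 i)

/-- The second-layer weights `a_j ∈ {± 1/√m}`. -/
def secondLayer {n p m : ℕ} (ω : Sample n p m) : Fin m → ℝ :=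
  fun j => if ω.2.2.2.1 j then 1 / Real.sqrt m else -(1 / Real.sqrt m)

/-- The initialization `w_j^{(0)} ∼ N(0, ω_init² I_p)`. -/
def initW {n p m : ℕ} (winit : ℝ) (ω : Sample n p m) : Fin m → Vec p :=
  fun j k => winit * ω.2.2.2.2 j k

/-- The trained first-layer weights `W^{(t)}`. -/
def netW {n p m : ℕ} (μ1 μ2 : Vec p) (η α winit : ℝ) (ω : Sample n p m) (t : ℕ) :
    Fin m → Vec p :=
  gdIter α (trainX μ1 μ2 ω) (trainY η ω) (secondLayer ω) (initW winit ω) t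

/-- The clean test distribution `P_clean` on `ℝ^p × ℝ`. -/
def Pclean (p : ℕ) (μ1 μ2 : Vec p) : Measure (Vec p × ℝ) :=
  Measure.map (fun w : Fin 4 × Vec p => (ctr μ1 μ2 w.1 + w.2, cl w.1))
    (((PMF.uniformOfFintype (Fin 4)).toMeasure).prod (stdG p))

/-- The Gaussian measure `N(ν, I_p)` at center index `q`. -/
def gaussAt {p : ℕ} (μ1 μ2 : Vec p) (q : Fin 4) : Measure (Vec p) :=
  Measure.map (fun z => ctr μ1 μ2 q + z) (stdG p)

/-- The clean test error of the classifier `sgn ∘ f(·; a, W)`. -/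
def testErr {p m : ℕ} (μ1 μ2 : Vec p) (a : Fin m → ℝ) (W : Fin m → Vec p) : ℝ :=
  ((Pclean p μ1 μ2) {xy : Vec p × ℝ | xy.2 ≠ Real.sign (nnet a W xy.1)}).toReal

/-! ### Counts, alignment, and the "good run" conditions -/

/-- `c_ν`: number of clean samples in the cluster with center index `q`. -/
def cntC {n : ℕ} (u : Fin n → Fin 4) (Y : Fin n → ℝ) (q : Fin 4) : ℕ :=
  (Finset.univ.filter fun i => u i = q ∧ Y i = cl q).card

/-- `n_ν`: number of noisy samples in the cluster with center index `q`. -/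
def cntN {n : ℕ} (u : Fin n → Fin 4) (Y : Fin n → ℝ) (q : Fin 4) : ℕ :=
  (Finset.univ.filter fun i => u i = q ∧ Y i ≠ cl q).card

/-- The clean samples of cluster `q` activating neuron `j` for weights `W`. -/
def actC {n p m : ℕ} (u : Fin n → Fin 4) (X : Fin n → Vec p) (Y : Fin n → ℝ)
    (W : Fin m → Vec p) (q : Fin 4) (j : Fin m) : Finset (Fin n) :=
  Finset.univ.filter fun i => u i = q ∧ Y i = cl q ∧ 0 < dot (W j) (X i)

/-- The noisy samples of cluster `q` activating neuron `j` for weights `W`. -/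
def actN {n p m : ℕ} (u : Fin n → Fin 4) (X : Fin n → Vec p) (Y : Fin n → ℝ)
    (W : Fin m → Vec p) (q : Fin 4) (j : Fin m) : Finset (Fin n) :=
  Finset.univ.filter fun i => u i = q ∧ Y i ≠ cl q ∧ 0 < dot (W j) (X i)

/-- `d_{ν,j} = |C_{ν,j}| - |N_{ν,j}|`. -/
def dval {n p m : ℕ} (u : Fin n → Fin 4) (X : Fin n → Vec p) (Y : Fin n → ℝ)
    (W : Fin m → Vec p) (q : Fin 4) (j : Fin m) : ℤ :=
  ((actC u X Y W q j).card : ℤ) - ((actN u X Y W q j).card : ℤ)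

/-- `D_{ν,j} = d_{ν,j} - d_{-ν,j}`. -/
def Dval {n p m : ℕ} (u : Fin n → Fin 4) (X : Fin n → Vec p) (Y : Fin n → ℝ)
    (W : Fin m → Vec p) (q : Fin 4) (j : Fin m) : ℤ :=
  dval u X Y W q j - dval u X Y W (negIdx q) j

/-- Neuron `j` is `(ν, κ)`-aligned (w.r.t. the initialization `W0`). -/
def Aligned {n p m : ℕ} (u : Fin n → Fin 4) (X : Fin n → Vec p) (Y : Fin n → ℝ)
    (W0 : Fin m → Vec p) (κ : ℝ) (q : Fin 4) (j : Fin m) : Prop :=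
  (n : ℝ) ^ ((1 : ℝ) / 2 - κ) < (Dval u X Y W0 q j : ℝ) ∧
  max ((dval u X Y W0 (negIdx q) j : ℝ)) ((dval u X Y W0 q j : ℝ)) <
    min (cntC u Y q : ℝ) (cntC u Y (negIdx q) : ℝ) -
      2 * ((cntN u Y q : ℝ) + (cntN u Y (negIdx q) : ℝ)) - Real.sqrt n

/-- Condition (B1). -/
def CondB1 {n p : ℕ} (μ1 μ2 : Vec p) (u : Fin n → Fin 4) (X : Fin n → Vec p) : Prop :=
  ∀ k : Fin n,
    (∀ ν ∈ centers μ1 μ2, dot (X k - ctr μ1 μ2 (u k)) ν ≤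
        10 * Real.sqrt (Real.log n) * nrm μ1) ∧
    |nrm (X k) ^ 2 - p - nrm μ1 ^ 2| ≤ 10 * Real.sqrt (p * Real.log n)

/-- Condition (B2). -/
def CondB2 {n p : ℕ} (μ1 μ2 : Vec p) (u : Fin n → Fin 4) (X : Fin n → Vec p) : Prop :=
  ∀ i k : Fin n, i ≠ k →
    |dot (X i) (X k) - dot (ctr μ1 μ2 (u i)) (ctr μ1 μ2 (u k))| ≤
      10 * Real.sqrt (p * Real.log n)

/-- Condition (B3). -/
def CondB3 {n : ℕ} (ε η : ℝ) (u : Fin n → Fin 4) (Y : Fin n → ℝ) : Prop :=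
  ∀ q : Fin 4,
    |(cntC u Y q : ℝ) + (cntN u Y q : ℝ) - n / 4| ≤ Real.sqrt (ε * n * Real.log n) ∧
    |(cntN u Y q : ℝ) - η * ((cntC u Y q : ℝ) + (cntN u Y q : ℝ))| ≤
      Real.sqrt (ε * η * n * Real.log n)

/-- Condition (B4). -/
def CondB4 {n : ℕ} (ε η : ℝ) (u : Fin n → Fin 4) (Y : Fin n → ℝ) : Prop :=
  ∀ q : Fin 4,
    (n : ℝ) ^ ((1 : ℝ) / 2 - ε) ≤
      |(cntC u Y q : ℝ) + (cntN u Y q : ℝ) -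
        (cntC u Y (negIdx q) : ℝ) - (cntN u Y (negIdx q) : ℝ)| ∧
    η * (n : ℝ) ^ ((1 : ℝ) / 2 - ε) ≤ |(cntN u Y q : ℝ) - (cntN u Y (negIdx q) : ℝ)|

/-- Conditions (B1)–(B4) together. -/
def CondB {n p : ℕ} (ε : ℝ) (μ1 μ2 : Vec p) (η : ℝ) (u : Fin n → Fin 4)
    (X : Fin n → Vec p) (Y : Fin n → ℝ) : Prop :=
  CondB1 μ1 μ2 u X ∧ CondB2 μ1 μ2 u X ∧ CondB3 ε η u Y ∧ CondB4 ε η u Y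

/-- Condition (C1): `‖W^{(0)}‖_F² ≤ (3/2) ω_init² m p`. -/
def CondC1 {p m : ℕ} (winit : ℝ) (W0 : Fin m → Vec p) : Prop :=
  ∑ j, ∑ k, (W0 j k) ^ 2 ≤ 3 / 2 * winit ^ 2 * m * p

/-- The positive neurons `J_Pos`. -/
def posNeurons {m : ℕ} (a : Fin m → ℝ) : Finset (Fin m) :=
  Finset.univ.filter fun j => 0 < a j

/-- The negative neurons `J_Neg`. -/
def negNeurons {m : ℕ} (a : Fin m → ℝ) : Finset (Fin m) :=
  Finset.univ.filter fun j => a j < 0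

/-- Condition (C2): `|J_Pos| ≥ m/3` and `|J_Neg| ≥ m/3`. -/
def CondC2 {m : ℕ} (a : Fin m → ℝ) : Prop :=
  (m : ℝ) / 3 ≤ (posNeurons a).card ∧ (m : ℝ) / 3 ≤ (negNeurons a).card

/-- Condition (D1). -/
def CondD1 {n p m : ℕ} (u : Fin n → Fin 4) (X : Fin n → Vec p)
    (a : Fin m → ℝ) (W0 : Fin m → Vec p) : Prop :=
  ∀ i : Fin n,
    (m : ℝ) / 7 ≤ ((posNeurons a).filter fun j => 0 < dot (W0 j) (X i)).card ∧
    (m : ℝ) / 7 ≤ ((negNeurons a).filter fun j => 0 < dot (W0 j) (X i)).card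

/-- Condition (D2). -/
def CondD2 {n p m : ℕ} (ε : ℝ) (u : Fin n → Fin 4) (X : Fin n → Vec p) (Y : Fin n → ℝ)
    (a : Fin m → ℝ) (W0 : Fin m → Vec p) : Prop :=
  ∀ q : Fin 4, ∀ κ : ℝ, 0 ≤ κ → κ < 1 / 2 →
    (m : ℝ) * (n : ℝ) ^ (-(10 * ε)) ≤
      ((posNeurons a).filter fun j => Aligned u X Y W0 κ q j).card ∧
    (m : ℝ) * (n : ℝ) ^ (-(10 * ε)) ≤
      ((negNeurons a).filter fun j => Aligned u X Y W0 κ q j).card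

/-- Condition (D3). -/
def CondD3 {n p m : ℕ} (ε : ℝ) (u : Fin n → Fin 4) (X : Fin n → Vec p) (Y : Fin n → ℝ)
    (a : Fin m → ℝ) (W0 : Fin m → Vec p) : Prop :=
  ∀ q : Fin 4,
    (1 - 10 * (n : ℝ) ^ (-(20 * ε))) * (posNeurons a).card ≤
      ((posNeurons a).filter fun j =>
        Aligned u X Y W0 (20 * ε) q j ∨ Aligned u X Y W0 (20 * ε) (negIdx q) j).card ∧
    (1 - 10 * (n : ℝ) ^ (-(20 * ε))) * (negNeurons a).card ≤
      ((negNeurons a).filter fun j =>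
        Aligned u X Y W0 (20 * ε) q j ∨ Aligned u X Y W0 (20 * ε) (negIdx q) j).card

/-- Condition (D4). -/
def CondD4 {n p m : ℕ} (u : Fin n → Fin 4) (X : Fin n → Vec p) (Y : Fin n → ℝ)
    (a : Fin m → ℝ) (W0 : Fin m → Vec p) : Prop :=
  ∀ q : Fin 4, ∀ κ : ℝ, 0 ≤ κ → κ < 1 / 2 →
    ((n : ℝ) / 10) * ((posNeurons a).filter fun j => Aligned u X Y W0 κ q j).card ≤
      (∑ j ∈ (posNeurons a).filter (fun j => Aligned u X Y W0 κ q j),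
        ((cntC u Y q : ℝ) - (cntN u Y q : ℝ) - (dval u X Y W0 (negIdx q) j : ℝ))) ∧
    ((n : ℝ) / 10) * ((negNeurons a).filter fun j => Aligned u X Y W0 κ q j).card ≤
      (∑ j ∈ (negNeurons a).filter (fun j => Aligned u X Y W0 κ q j),
        ((cntC u Y q : ℝ) - (cntN u Y q : ℝ) - (dval u X Y W0 (negIdx q) j : ℝ)))

/-- Conditions (D1)–(D4) together. -/
def CondD {n p m : ℕ} (ε : ℝ) (u : Fin n → Fin 4) (X : Fin n → Vec p) (Y : Fin n → ℝ)
    (a : Fin m → ℝ) (W0 : Fin m → Vec p) : Prop :=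
  CondD1 u X a W0 ∧ CondD2 ε u X Y a W0 ∧ CondD3 ε u X Y a W0 ∧ CondD4 u X Y a W0

/-- A "good run": conditions (B1)–(B4), (C1)–(C2) and (D1)–(D4) all hold. -/
def GoodRun {n p m : ℕ} (ε : ℝ) (μ1 μ2 : Vec p) (η winit : ℝ) (u : Fin n → Fin 4)
    (X : Fin n → Vec p) (Y : Fin n → ℝ) (a : Fin m → ℝ) (W0 : Fin m → Vec p) : Prop :=
  CondB ε μ1 μ2 η u X Y ∧ CondC1 winit W0 ∧ CondC2 a ∧ CondD ε u X Y a W0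

/-- Labels take values in `{±1}`. -/
def ModelData {n : ℕ} (Y : Fin n → ℝ) : Prop := ∀ i, Y i = 1 ∨ Y i = -1

/-- Second-layer weights take values in `{±1/√m}`. -/
def ModelLayer {m : ℕ} (a : Fin m → ℝ) : Prop :=
  ∀ j, a j = 1 / Real.sqrt m ∨ a j = -(1 / Real.sqrt m)

end XOR

namespace XOR

attribute [local instance] Classical.propDecidable


/-! ### Auxiliary lemmas for the proof -/

lemma dot_self_nonneg {p : ℕ} (x : Vec p) : 0 ≤ dot x x :=
  Finset.sum_nonneg fun _ _ => mul_self_nonneg _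

lemma sq_nrm {p : ℕ} (x : Vec p) : nrm x ^ 2 = dot x x :=
  Real.sq_sqrt (dot_self_nonneg x)

lemma nrm_nonneg {p : ℕ} (x : Vec p) : 0 ≤ nrm x := Real.sqrt_nonneg _

lemma abs_dot_le {p : ℕ} (x y : Vec p) : |dot x y| ≤ nrm x * nrm y := by
  have h : (dot x y) ^ 2 ≤ (∑ k, x k ^ 2) * (∑ k, y k ^ 2) := by
    simpa [dot] using Finset.sum_mul_sq_le_sq_mul_sq Finset.univ x y
  have hx : ∑ k, x k ^ 2 = dot x x := by simp [dot, sq]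
  have hy : ∑ k, y k ^ 2 = dot y y := by simp [dot, sq]
  rw [hx, hy] at h
  have h2 := Real.sqrt_le_sqrt h
  rwa [Real.sqrt_sq_eq_abs, Real.sqrt_mul (dot_self_nonneg x)] at h2

lemma dot_comm' {p : ℕ} (x y : Vec p) : dot x y = dot y x :=
  Finset.sum_congr rfl fun k _ => mul_comm _ _

lemma dot_neg_left' {p : ℕ} (x y : Vec p) : dot (-x) y = -(dot x y) := by
  simp [dot, Finset.sum_neg_distrib]

lemma dot_neg_right' {p : ℕ} (x y : Vec p) : dot x (-y) = -(dot x y) := by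
  simp [dot, Finset.sum_neg_distrib]

lemma lossG_pos (z : ℝ) : 0 < lossG z := by
  have : (0:ℝ) < 1 + Real.exp z := by positivity
  exact div_pos one_pos this

lemma lossG_le_one (z : ℝ) : lossG z ≤ 1 := by
  have h : (0:ℝ) < 1 + Real.exp z := by positivity
  rw [lossG, div_le_one h]
  nlinarith [Real.exp_pos z]

lemma lossG_add_neg (z : ℝ) : lossG z + lossG (-z) = 1 := by
  have h1 : (0:ℝ) < 1 + Real.exp z := by positivity
  have h2 : (0:ℝ) < 1 + Real.exp (-z) := by positivity
  have hmul : Real.exp z * Real.exp (-z) = 1 := by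
    rw [← Real.exp_add]; simp
  rw [lossG, lossG]
  field_simp
  nlinarith

lemma lossG_half_nonneg {z : ℝ} (hz : 0 ≤ z) : |lossG z - 1/2| ≤ z / 2 := by
  have hE : 1 ≤ Real.exp z := Real.one_le_exp hz
  have hE0 : (0:ℝ) < 1 + Real.exp z := by positivity
  have hinv : (1 - z) * Real.exp z ≤ 1 := by
    have h := Real.add_one_le_exp (-z)
    have h2 := mul_le_mul_of_nonneg_right h (Real.exp_pos z).le
    rw [← Real.exp_add, neg_add_cancel, Real.exp_zero] at h2
    linarith
  have h1 : lossG z ≤ 1/2 := by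
    rw [lossG, div_le_div_iff₀ hE0 (by norm_num)]; linarith
  have h2 : 1/2 - z/2 ≤ lossG z := by
    rw [lossG, le_div_iff₀ hE0]; nlinarith
  rw [abs_le]; constructor <;> [linarith; linarith]

lemma lossG_half (z : ℝ) : |lossG z - 1/2| ≤ |z| / 2 := by
  rcases le_or_gt 0 z with hz | hz
  · rw [abs_of_nonneg hz]; exact lossG_half_nonneg hz
  · have h := lossG_half_nonneg (neg_nonneg.mpr hz.le)
    have hid := lossG_add_neg z
    rw [abs_of_neg hz]
    have heq : lossG z - 1/2 = -(lossG (-z) - 1/2) := by linarith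
    rw [heq, abs_neg]; exact h

lemma aj_abs {m : ℕ} {a : Fin m → ℝ} (ha : ModelLayer a) (j : Fin m) :
    |a j| = 1 / Real.sqrt m := by
  rcases ha j with h | h <;> rw [h]
  · rw [abs_of_nonneg]; positivity
  · rw [abs_neg, abs_of_nonneg]; positivity

lemma aj_sq {m : ℕ} {a : Fin m → ℝ} (ha : ModelLayer a) (j : Fin m) :
    a j ^ 2 = 1 / m := by
  have hm0 : (0:ℝ) ≤ m := Nat.cast_nonneg m
  have key : (1 / Real.sqrt m) ^ 2 = 1 / (m:ℝ) := by
    rw [div_pow, one_pow, Real.sq_sqrt hm0]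
  rcases ha j with h | h <;> rw [h]
  · exact key
  · rw [neg_sq]; exact key

lemma reluD_abs (z : ℝ) : |reluD z| ≤ 1 := by
  rw [reluD]; split <;> norm_num

lemma step_diff {n p m : ℕ} {α : ℝ} (hα : 0 ≤ α) (X : Fin n → Vec p) (Y : Fin n → ℝ)
    {a : Fin m → ℝ} (W : Fin m → Vec p) (hm : 1 ≤ m)
    (ha : ModelLayer a) (hY : ModelData Y) (x : Vec p) :
    |nnet a (gdStep α X Y a W) x - nnet a W x| ≤ α / n * ∑ l, |dot (X l) x| := by
  have hYabs : ∀ l, |Y l| = 1 := by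
    intro l; rcases hY l with h | h <;> simp [h]
  have hj : ∀ j, dot (gdStep α X Y a W j) x = dot (W j) x
      + ∑ l, (α * a j / n) *
        ((lossG (Y l * nnet a W (X l)) * reluD (dot (W j) (X l)) * Y l) * dot (X l) x) := by
    intro j
    simp only [dot, gdStep, add_mul, Finset.sum_add_distrib]
    congr 1
    simp only [Finset.mul_sum, Finset.sum_mul]
    rw [Finset.sum_comm]
    exact Finset.sum_congr rfl fun l _ => Finset.sum_congr rfl fun k _ => by ring
  have hbound : ∀ j, |dot (gdStep α X Y a W j) x - dot (W j) x| ≤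
      (α * |a j| / n) * ∑ l, |dot (X l) x| := by
    intro j
    rw [hj j, add_sub_cancel_left]
    refine (Finset.abs_sum_le_sum_abs _ _).trans ?_
    rw [Finset.mul_sum]
    refine Finset.sum_le_sum fun l _ => ?_
    rw [abs_mul, abs_mul, abs_div, abs_mul, Nat.abs_cast, abs_of_nonneg hα]
    have hE : |lossG (Y l * nnet a W (X l)) * reluD (dot (W j) (X l)) * Y l| ≤ 1 := by
      rw [abs_mul, abs_mul, hYabs l, mul_one]
      have h1 : |lossG (Y l * nnet a W (X l))| ≤ 1 := by
        rw [abs_of_pos (lossG_pos _)]; exact lossG_le_one _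
      exact mul_le_one₀ h1 (abs_nonneg _) (reluD_abs _)
    have hd : (0:ℝ) ≤ |dot (X l) x| := abs_nonneg _
    have hc : (0:ℝ) ≤ α * |a j| / n := by positivity
    calc α * |a j| / ↑n * (|lossG (Y l * nnet a W (X l)) * reluD (dot (W j) (X l)) * Y l| * |dot (X l) x|)
        ≤ α * |a j| / ↑n * (1 * |dot (X l) x|) :=
          mul_le_mul_of_nonneg_left (mul_le_mul_of_nonneg_right hE hd) hc
      _ = α * |a j| / ↑n * |dot (X l) x| := by ring
  have hdiff : nnet a (gdStep α X Y a W) x - nnet a W x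
      = ∑ j, a j * (relu (dot (gdStep α X Y a W j) x) - relu (dot (W j) x)) := by
    simp only [nnet, mul_sub, Finset.sum_sub_distrib]
  rw [hdiff]
  refine (Finset.abs_sum_le_sum_abs _ _).trans ?_
  have hstep : ∀ j ∈ Finset.univ, |a j * (relu (dot (gdStep α X Y a W j) x) - relu (dot (W j) x))|
      ≤ (α / n * ∑ l, |dot (X l) x|) * (a j ^ 2) := by
    intro j _
    rw [abs_mul]
    have h1 : |relu (dot (gdStep α X Y a W j) x) - relu (dot (W j) x)| ≤
        |dot (gdStep α X Y a W j) x - dot (W j) x| := abs_max_sub_max_le_abs _ _ _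
    have h2 := h1.trans (hbound j)
    calc |a j| * |relu (dot (gdStep α X Y a W j) x) - relu (dot (W j) x)|
        ≤ |a j| * ((α * |a j| / n) * ∑ l, |dot (X l) x|) :=
          mul_le_mul_of_nonneg_left h2 (abs_nonneg _)
      _ = (α / n * ∑ l, |dot (X l) x|) * (a j ^ 2) := by rw [← sq_abs]; ring
  refine (Finset.sum_le_sum hstep).trans ?_
  rw [← Finset.mul_sum]
  have hsum : ∑ j : Fin m, a j ^ 2 = 1 := by
    have hall : ∀ j ∈ Finset.univ, a j ^ 2 = 1 / (m:ℝ) := fun j _ => aj_sq ha j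
    rw [Finset.sum_congr rfl hall, Finset.sum_const, Finset.card_univ, Fintype.card_fin,
      nsmul_eq_mul]
    have : (m:ℝ) ≠ 0 := by positivity
    field_simp
  rw [hsum, mul_one]

lemma init_bound {p m : ℕ} {a : Fin m → ℝ} (ha : ModelLayer a) (hm : 1 ≤ m)
    (W : Fin m → Vec p) (x : Vec p) :
    |nnet a W x| ≤ Real.sqrt (∑ j, ∑ k, (W j k)^2) * nrm x := by
  have h1 : |nnet a W x| ≤ ∑ j, |a j| * (nrm (W j) * nrm x) := by
    refine (Finset.abs_sum_le_sum_abs _ _).trans (Finset.sum_le_sum fun j _ => ?_)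
    rw [abs_mul]
    refine mul_le_mul_of_nonneg_left ?_ (abs_nonneg _)
    have hr : |relu (dot (W j) x)| ≤ |dot (W j) x| := by
      rw [relu]; rcases le_or_gt (dot (W j) x) 0 with h | h
      · rw [max_eq_right h]; simpa using abs_nonneg (dot (W j) x)
      · rw [max_eq_left h.le]
    exact hr.trans (abs_dot_le _ _)
  have hm0 : (0:ℝ) < Real.sqrt m := Real.sqrt_pos.mpr (by exact_mod_cast hm)
  set s : ℝ := ∑ j, (1 / Real.sqrt m) * nrm (W j) with hs
  have hCS : s ^ 2 ≤ ∑ j, ∑ k, (W j k) ^ 2 := by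
    have h := Finset.sum_mul_sq_le_sq_mul_sq Finset.univ (fun _ : Fin m => 1 / Real.sqrt m)
      (fun j => nrm (W j))
    have h2 : ∑ _j : Fin m, (1 / Real.sqrt m) ^ 2 = 1 := by
      rw [Finset.sum_const, Finset.card_univ, Fintype.card_fin, nsmul_eq_mul, div_pow,
        one_pow, Real.sq_sqrt (Nat.cast_nonneg m)]
      have : (m:ℝ) ≠ 0 := by positivity
      field_simp
    have h3 : ∀ j, nrm (W j) ^ 2 = ∑ k, (W j k) ^ 2 := by
      intro j; rw [sq_nrm, dot]
      exact Finset.sum_congr rfl fun k _ => (sq (W j k)) ▸ by ring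
    calc s ^ 2 ≤ (∑ _j : Fin m, (1 / Real.sqrt m) ^ 2) * ∑ j, nrm (W j) ^ 2 := h
      _ = ∑ j, ∑ k, (W j k) ^ 2 := by
          rw [h2, one_mul]; exact Finset.sum_congr rfl fun j _ => h3 j
  have hsnn : 0 ≤ s := Finset.sum_nonneg fun j _ => mul_nonneg (by positivity) (nrm_nonneg _)
  have hs2 : s ≤ Real.sqrt (∑ j, ∑ k, (W j k)^2) :=
    (Real.le_sqrt hsnn (by positivity)).mpr hCS
  calc |nnet a W x| ≤ ∑ j, |a j| * (nrm (W j) * nrm x) := h1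
    _ = s * nrm x := by
        rw [hs, Finset.sum_mul]
        exact Finset.sum_congr rfl fun j _ => by rw [aj_abs ha j]; ring
    _ ≤ Real.sqrt (∑ j, ∑ k, (W j k)^2) * nrm x :=
        mul_le_mul_of_nonneg_right hs2 (nrm_nonneg x)

lemma ctr_dot_bound {p : ℕ} {μ1 μ2 : Vec p} (h : MeanHyp μ1 μ2) (q q' : Fin 4) :
    |dot (ctr μ1 μ2 q) (ctr μ1 μ2 q')| ≤ nrm μ1 ^ 2 := by
  obtain ⟨ho, hn⟩ := h
  have h11 : dot μ1 μ1 = nrm μ1 ^ 2 := (sq_nrm μ1).symm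
  have h22 : dot μ2 μ2 = nrm μ1 ^ 2 := by rw [← sq_nrm, hn]
  have h21 : dot μ2 μ1 = 0 := by rw [dot_comm']; exact ho
  have hM : 0 ≤ nrm μ1 ^ 2 := by positivity
  fin_cases q <;> fin_cases q' <;>
    simp [ctr, dot_neg_left', dot_neg_right', h11, h22, ho, h21, abs_of_nonneg hM, hM]

set_option maxHeartbeats 4000000 in
/-- Lemma on the sigmoid derivatives: under a good run, for
every `0 ≤ t ≤ 1/(√n p α) − 2`, `max_i |g_i^{(t)} − 1/2| ≤ 2/n^{3/2}`. -/
theorem sigmoid_derivative_bound :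
    ∀ ε : ℝ, 0 < ε → ε < 1 / 4000 →
      ∃ (C₀ : ℝ) (N₀ : ℕ),
        ∀ C : ℝ, C₀ ≤ C →
        ∀ (n p m : ℕ) (μ1 μ2 : Vec p) (η α winit : ℝ)
          (u : Fin n → Fin 4) (X : Fin n → Vec p) (Y : Fin n → ℝ)
          (a : Fin m → ℝ) (W0 : Fin m → Vec p),
          N₀ ≤ n →
          MeanHyp μ1 μ2 →
          ParamHyp η α winit →
          Assum C n p m (nrm μ1) η α winit →
          ModelData Y →
          ModelLayer a →
          GoodRun ε μ1 μ2 η winit u X Y a W0 →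
          ∀ t : ℕ, (t : ℝ) ≤ 1 / (Real.sqrt n * p * α) - 2 →
            ∀ i : Fin n,
              |lossG (Y i * nnet a (gdIter α X Y a W0 t) (X i)) - 1 / 2| ≤
                2 / (n : ℝ) ^ ((3 : ℝ) / 2) := by
  intro ε hε hε'
  refine ⟨100, 1, ?_⟩
  intro C hC n p m μ1 μ2 η α winit u X Y a W0 hn hMean hParam hAssum hY ha hGood t ht i
  obtain ⟨hA1, hA2, hA3, hA4, hA5, hA6⟩ := hAssum
  obtain ⟨hη0, hη2, hα, hω⟩ := hParam
  obtain ⟨⟨hB1, hB2, hB3, hB4⟩, hC1, hC2, hD⟩ := hGood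
  have hn1 : (1:ℝ) ≤ n := by exact_mod_cast hn
  have hn0 : (0:ℝ) < n := by linarith only [hn1]
  have hC0 : (0:ℝ) < C := by linarith only [hC]
  have hpne : p ≠ 0 := by
    intro h
    rw [h] at hA4
    simp at hA4
    linarith only [hA4, hα]
  have hp1 : (1:ℝ) ≤ p := by exact_mod_cast Nat.one_le_iff_ne_zero.mpr hpne
  have hpp : (0:ℝ) < p := by linarith only [hp1]
  have hm1 : (1:ℝ) ≤ m := by
    have h51 : (1:ℝ) ≤ (n:ℝ) ^ (0.02:ℝ) := by
      calc (1:ℝ) = (n:ℝ) ^ (0:ℝ) := (Real.rpow_zero _).symm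
        _ ≤ _ := Real.rpow_le_rpow_of_exponent_le hn1 (by norm_num)
    nlinarith only [hA6, h51, hC]
  have hmnat : 1 ≤ m := by exact_mod_cast hm1
  set M2 := nrm μ1 ^ 2 with hM2def
  have hM2nn : 0 ≤ M2 := by positivity
  have hn51 : (1:ℝ) ≤ (n:ℝ) ^ (0.51:ℝ) := by
    calc (1:ℝ) = (n:ℝ) ^ (0:ℝ) := (Real.rpow_zero _).symm
      _ ≤ _ := Real.rpow_le_rpow_of_exponent_le hn1 (by norm_num)
  have hsqrtp : (0:ℝ) < Real.sqrt p := Real.sqrt_pos.mpr hpp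
  have hsqn : Real.sqrt n ≤ (n:ℝ) ^ (0.51:ℝ) := by
    rw [Real.sqrt_eq_rpow]
    exact Real.rpow_le_rpow_of_exponent_le hn1 (by norm_num)
  have hkey1 : 100 * (Real.sqrt p * Real.sqrt n) ≤ M2 := by
    have hs : Real.sqrt n * Real.sqrt p ≤ (n:ℝ)^(0.51:ℝ) * Real.sqrt p :=
      mul_le_mul_of_nonneg_right hsqn hsqrtp.le
    nlinarith only [hA1, hs, hC, mul_nonneg (Real.rpow_nonneg hn0.le (0.51:ℝ)) hsqrtp.le]
  have hlogn : Real.log n ≤ n := by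
    have := Real.log_le_sub_one_of_pos hn0
    linarith only [this]
  have hL : 10 * Real.sqrt ((p:ℝ) * Real.log n) ≤ M2 / 10 := by
    have h1 : Real.sqrt ((p:ℝ) * Real.log n) ≤ Real.sqrt ((p:ℝ) * n) :=
      Real.sqrt_le_sqrt (mul_le_mul_of_nonneg_left hlogn hpp.le)
    have h2 : Real.sqrt ((p:ℝ) * n) = Real.sqrt p * Real.sqrt n := Real.sqrt_mul hpp.le _
    linarith only [h1, h2, hkey1]
  have hn2 : (1:ℝ) ≤ (n:ℝ)^2 := one_le_pow₀ hn1
  have hCn2 : (100:ℝ) ≤ C * (n:ℝ)^2 := by nlinarith only [hn2, hC]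
  have hM2p : 100 * M2 ≤ p := by
    nlinarith only [mul_le_mul_of_nonneg_right hCn2 hM2nn, hA2]
  have hCn2' : 100 * (n:ℝ) ≤ C * (n:ℝ)^2 := by nlinarith only [hn1, hC, sq_nonneg ((n:ℝ) - 1)]
  have hnM2 : 100 * ((n:ℝ) * M2) ≤ p := by
    nlinarith only [mul_le_mul_of_nonneg_right hCn2' hM2nn, hA2]
  have hdiag : ∀ l, dot (X l) (X l) ≤ (51/50) * (p:ℝ) := by
    intro l
    have hb := abs_le.mp (hB1 l).2
    have h1 : nrm (X l) ^ 2 ≤ (p:ℝ) + M2 + 10 * Real.sqrt ((p:ℝ) * Real.log n) := by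
      linarith only [hb.2, hM2def]
    rw [sq_nrm] at h1
    linarith only [h1, hL, hM2p]
  have hcross : ∀ l, l ≠ i → |dot (X l) (X i)| ≤ (11/10) * M2 := by
    intro l hl
    have h1 := abs_le.mp (hB2 l i hl)
    have h2 := abs_le.mp (ctr_dot_bound hMean (u l) (u i))
    rw [abs_le]
    constructor
    · linarith only [h1.1, h2.1, hL, hM2def]
    · linarith only [h1.2, h2.2, hL, hM2def]
  have hS : (∑ l, |dot (X l) (X i)|) ≤ (21/20) * (p:ℝ) := by
    rw [← Finset.add_sum_erase _ _ (Finset.mem_univ i)]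
    have h1 : |dot (X i) (X i)| ≤ (51/50) * (p:ℝ) := by
      rw [abs_of_nonneg (dot_self_nonneg _)]; exact hdiag i
    have h2 : ∑ l ∈ Finset.univ.erase i, |dot (X l) (X i)| ≤ (n:ℝ) * ((11/10) * M2) := by
      have hb := Finset.sum_le_card_nsmul (Finset.univ.erase i)
        (fun l => |dot (X l) (X i)|) ((11/10) * M2)
        (fun l hl => hcross l (Finset.ne_of_mem_erase hl))
      rw [nsmul_eq_mul] at hb
      refine hb.trans ?_
      have hcard : (((Finset.univ.erase i).card : ℕ) : ℝ) ≤ (n:ℝ) := by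
        have hle : (Finset.univ.erase i).card ≤ (Finset.univ : Finset (Fin n)).card :=
          Finset.card_le_card (Finset.erase_subset _ _)
        rw [Finset.card_univ, Fintype.card_fin] at hle
        exact_mod_cast hle
      nlinarith only [hcard, hM2nn]
    linarith only [h1, h2, hnM2]
  have hstepB : ∀ W : Fin m → Vec p,
      |nnet a (gdStep α X Y a W) (X i) - nnet a W (X i)| ≤ α * ((21/20) * (p:ℝ)) / n := by
    intro W
    refine (step_diff hα.le X Y W hmnat ha hY (X i)).trans ?_
    calc α / n * (∑ l, |dot (X l) (X i)|) ≤ α / n * ((21/20) * (p:ℝ)) :=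
          mul_le_mul_of_nonneg_left hS (by positivity)
      _ = α * ((21/20) * (p:ℝ)) / n := div_mul_eq_mul_div α (n:ℝ) _
  have hB0 : |nnet a W0 (X i)| ≤ 2 * winit * Real.sqrt m * p := by
    have hB0' : |nnet a W0 (X i)| ≤ Real.sqrt (3/2 * winit^2 * m * p) * nrm (X i) := by
      refine (init_bound ha hmnat W0 (X i)).trans ?_
      exact mul_le_mul_of_nonneg_right (Real.sqrt_le_sqrt hC1) (nrm_nonneg _)
    refine hB0'.trans ?_
    have h1 : (Real.sqrt (3/2 * winit^2 * m * p))^2 = 3/2 * winit^2 * m * p :=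
      Real.sq_sqrt (by positivity)
    have h2 : nrm (X i) ^ 2 ≤ (51/50) * (p:ℝ) := by rw [sq_nrm]; exact hdiag i
    have hrhs : (0:ℝ) ≤ 2 * winit * Real.sqrt m * p := by positivity
    refine le_of_pow_le_pow_left₀ two_ne_zero hrhs ?_
    have hsm : Real.sqrt (m:ℝ) ^ 2 = (m:ℝ) := Real.sq_sqrt (Nat.cast_nonneg m)
    have hnn : (0:ℝ) ≤ 3/2 * winit^2 * m * p :=  by positivity
    calc (Real.sqrt (3/2 * winit^2 * m * p) * nrm (X i)) ^ 2
        = (3/2 * winit^2 * m * p) * nrm (X i) ^ 2 := by rw [mul_pow, h1]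
      _ ≤ (3/2 * winit^2 * m * p) * ((51/50) * (p:ℝ)) :=
          mul_le_mul_of_nonneg_left h2 hnn
      _ ≤ (2 * winit * Real.sqrt m * p) ^ 2 := by
          have hq : (0:ℝ) ≤ winit^2 * m * p^2 := by positivity
          have hsm2 : winit^2 * (p:ℝ)^2 * (Real.sqrt m)^2 = winit^2 * (p:ℝ)^2 * (m:ℝ) := by
            rw [hsm]
          nlinarith only [hsm2, hq]
  -- initial value bound
  have hA5' : winit * Real.sqrt m * p ≤ α * M2 := by
    have h32 : Real.sqrt m ≤ (m:ℝ) ^ ((3:ℝ)/2) := by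
      rw [Real.sqrt_eq_rpow]
      exact Real.rpow_le_rpow_of_exponent_le hm1 (by norm_num)
    have hm32nn : (0:ℝ) ≤ (m:ℝ) ^ ((3:ℝ)/2) := Real.rpow_nonneg (Nat.cast_nonneg m) _
    nlinarith only [hA5, h32, hn1, mul_nonneg hω hpp.le,
      mul_nonneg (mul_nonneg hω hm32nn) hpp.le, Real.sqrt_nonneg (m:ℝ)]
  have h4 : α * (C * n * p) ≤ 1 := (le_div_iff₀ (by positivity)).mp hA4
  have hαM2C : α * M2 * (C^2 * (n:ℝ)^3) ≤ 1 := by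
    nlinarith only [mul_le_mul_of_nonneg_left hA2
      (show (0:ℝ) ≤ α * (C * (n:ℝ)) by positivity), h4]
  set N32 : ℝ := Real.sqrt n * n with hN32def
  have hsnn1 : 1 ≤ Real.sqrt n := by
    nlinarith only [Real.sq_sqrt hn0.le, Real.sqrt_nonneg (n:ℝ), sq_nonneg (Real.sqrt n - 1), hn1]
  have hsn : Real.sqrt n ≤ (n:ℝ) := by
    nlinarith only [Real.sq_sqrt hn0.le, sq_nonneg (Real.sqrt n - 1), hn1]
  have hN32pos : 0 < N32 := by rw [hN32def]; positivity
  have hN32n3 : N32 ≤ (n:ℝ)^3 := by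
    rw [hN32def]
    have e1 : Real.sqrt n * n ≤ (n:ℝ) * n := mul_le_mul_of_nonneg_right hsn hn0.le
    have e2 : (n:ℝ) * n ≤ (n:ℝ)^3 := by nlinarith only [hn1, sq_nonneg (n:ℝ)]
    linarith only [e1, e2]
  have hinit : 2 * winit * Real.sqrt m * p ≤ (1/100) / N32 := by
    rw [le_div_iff₀ hN32pos]
    have hαM2nn : (0:ℝ) ≤ α * M2 := by positivity
    have hC2 : (10000:ℝ) ≤ C^2 := by nlinarith only [hC]
    have h3 : (α * M2) * (n:ℝ)^3 ≤ 1/10000 := by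
      nlinarith only [hαM2C, hC2, mul_nonneg hαM2nn (by positivity : (0:ℝ) ≤ (n:ℝ)^3)]
    have h1 : winit * Real.sqrt m * p * N32 ≤ (α * M2) * N32 :=
      mul_le_mul_of_nonneg_right hA5' hN32pos.le
    have h2 : (α * M2) * N32 ≤ (α * M2) * (n:ℝ)^3 :=
      mul_le_mul_of_nonneg_left hN32n3 hαM2nn
    linarith only [h1, h2, h3]
  have htpos : (0:ℝ) ≤ (t:ℝ) := Nat.cast_nonneg t
  have hden : (0:ℝ) < Real.sqrt n * p * α := by positivity
  have hT1 : (t:ℝ) * (Real.sqrt n * p * α) ≤ 1 := by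
    rw [← le_div_iff₀ hden]
    linarith only [ht]
  have hdrift : (t:ℝ) * (α * ((21/20) * (p:ℝ)) / n) ≤ (21/20) / N32 := by
    rw [le_div_iff₀ hN32pos]
    have hexp : (t:ℝ) * (α * ((21/20) * (p:ℝ)) / n) * N32
        = (21/20) * ((t:ℝ) * (Real.sqrt n * p * α)) := by
      rw [hN32def]; field_simp
    rw [hexp]
    linarith only [hT1]
  have hiter : ∀ s : ℕ, |nnet a (gdIter α X Y a W0 s) (X i)| ≤
      2 * winit * Real.sqrt m * p + s * (α * ((21/20) * (p:ℝ)) / n) := by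
    intro s
    induction s with
    | zero => simpa [gdIter] using hB0
    | succ s ih =>
      have h1 := hstepB (gdIter α X Y a W0 s)
      simp only [gdIter]
      have htri : |nnet a (gdStep α X Y a (gdIter α X Y a W0 s)) (X i)| ≤
          |nnet a (gdStep α X Y a (gdIter α X Y a W0 s)) (X i)
            - nnet a (gdIter α X Y a W0 s) (X i)| + |nnet a (gdIter α X Y a W0 s) (X i)| := by
        have := abs_add_le (nnet a (gdStep α X Y a (gdIter α X Y a W0 s)) (X i)
            - nnet a (gdIter α X Y a W0 s) (X i)) (nnet a (gdIter α X Y a W0 s) (X i))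
        rwa [sub_add_cancel] at this
      push_cast
      push_cast at ih
      linarith only [htri, h1, ih]
  have hfinal : |nnet a (gdIter α X Y a W0 t) (X i)| ≤ (1/100) / N32 + (21/20) / N32 := by
    refine (hiter t).trans ?_
    linarith only [hinit, hdrift]
  have hYi : |Y i| = 1 := by rcases hY i with h | h <;> simp [h]
  have hN32eq : (n:ℝ) ^ ((3:ℝ)/2) = N32 := by
    have h1 : (n:ℝ) ^ ((3:ℝ)/2) = (n:ℝ) ^ ((1:ℝ)/2) * (n:ℝ) ^ (1:ℝ) := by
      rw [← Real.rpow_add hn0]; norm_num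
    rw [h1, Real.rpow_one, ← Real.sqrt_eq_rpow, hN32def]
  calc |lossG (Y i * nnet a (gdIter α X Y a W0 t) (X i)) - 1/2|
      ≤ |Y i * nnet a (gdIter α X Y a W0 t) (X i)| / 2 := lossG_half _
    _ = |nnet a (gdIter α X Y a W0 t) (X i)| / 2 := by rw [abs_mul, hYi, one_mul]
    _ ≤ ((1/100) / N32 + (21/20) / N32) / 2 := by linarith only [hfinal]
    _ ≤ 2 / (n:ℝ) ^ ((3:ℝ)/2) := by
        rw [hN32eq, ← add_div, div_div, div_le_div_iff₀ (by positivity) hN32pos]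
        nlinarith only [hN32pos]


end XOR
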